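/- A symmetric semi-definite pencil A - λB (with B positive semi-definite) is simultaneously diagonalizable by a congruence (i.e., there is an invertible W with both W^T A W and W^T B W diagonal) if and only if the block size n_0 in its canonical form is zero. -/

import Mathlib

open Matrix Kronecker

/-- The key congruence invariant: if `B x = 0` and `A x` lies in the range of `B`,
then `A x = 0`.  It holds for any pair of diagonal matrices and is preserved by
congruence with an invertible matrix. -/
def SDinv {m : Type*} [Fintype m] (A B : Matrix m m ℝ) : Prop :=
  ∀ x z : m → ℝ, B *ᵥ x = 0 → A *ᵥ x = B *ᵥ z → A *ᵥ x = 0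

lemma sd_diag {m : Type*} [Fintype m] [DecidableEq m] (dA dB : m → ℝ) :
    SDinv (Matrix.diagonal dA) (Matrix.diagonal dB) := by
  intro x z h1 h2
  funext i
  have h1i := congrFun h1 i
  have h2i := congrFun h2 i
  simp only [Matrix.mulVec_diagonal, Pi.zero_apply] at h1i h2i ⊢
  rcases eq_or_ne (dB i) 0 with h | h
  · rw [h2i, h, zero_mul]
  · have hx : x i = 0 := by
      rcases mul_eq_zero.1 h1i with h' | h'
      · exact absurd h' h
      · exact h'
    rw [hx, mul_zero]

lemma sd_congr {n : ℕ} (A B U : Matrix (Fin n) (Fin n) ℝ) (hU : IsUnit U)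
    (h : SDinv A B) : SDinv (Uᵀ * A * U) (Uᵀ * B * U) := by
  have hdet : IsUnit U.det := (Matrix.isUnit_iff_isUnit_det U).1 hU
  have hdetT : IsUnit Uᵀ.det := by rwa [Matrix.det_transpose]
  intro x z h1 h2
  have key : ∀ (M : Matrix (Fin n) (Fin n) ℝ) (v : Fin n → ℝ),
      (Uᵀ * M * U) *ᵥ v = Uᵀ *ᵥ (M *ᵥ (U *ᵥ v)) := by
    intro M v
    rw [← Matrix.mulVec_mulVec, ← Matrix.mulVec_mulVec]
  have hTinj : Function.Injective (fun v => Uᵀ *ᵥ v : (Fin n → ℝ) → (Fin n → ℝ)) := by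
    intro a b hab
    have := congrArg (fun v => (Uᵀ)⁻¹ *ᵥ v) hab
    simpa [Matrix.mulVec_mulVec, Matrix.nonsing_inv_mul _ hdetT] using this
  rw [key] at h1 h2 ⊢
  rw [key] at h2
  have h1' : B *ᵥ (U *ᵥ x) = 0 := hTinj (by simpa using h1)
  have h2' : A *ᵥ (U *ᵥ x) = B *ᵥ (U *ᵥ z) := hTinj h2
  rw [h (U *ᵥ x) (U *ᵥ z) h1' h2']
  simp

lemma sd_submatrix {m : Type*} [Fintype m] [DecidableEq m] {n : ℕ}
    (A B : Matrix (Fin n) (Fin n) ℝ) (e : m ≃ Fin n) (h : SDinv A B) :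
    SDinv (A.submatrix e e) (B.submatrix e e) := by
  intro x z h1 h2
  simp only [Matrix.submatrix_mulVec_equiv] at h1 h2 ⊢
  have h1' : B *ᵥ (x ∘ e.symm) = 0 := by
    funext i
    have := congrFun h1 (e.symm i)
    simpa using this
  have h2' : A *ᵥ (x ∘ e.symm) = B *ᵥ (z ∘ e.symm) := by
    funext i
    have := congrFun h2 (e.symm i)
    simpa using this
  rw [h _ _ h1' h2']
  rfl

/-- A symmetric semi-definite pencil A - λB (B positive semi-definite)
is simultaneously diagonalizable by a congruence iff the block size n₀ in its
canonical form is zero. -/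
theorem stmt11 {n : ℕ} (A B : Matrix (Fin n) (Fin n) ℝ)
    (hA : A.IsHermitian) (hB : B.PosSemidef)
    (n0 n1 n2 n3 : ℕ)
    (e : ((Fin n0 × Fin 2) ⊕ (Fin n1 ⊕ (Fin n2 ⊕ Fin n3))) ≃ Fin n)
    (W : Matrix (Fin n) (Fin n) ℝ) (Λ1 : Fin n1 → ℝ) (Λ2 : Fin n2 → ℝ)
    (hW : IsUnit W) (hΛ2 : ∀ i, Λ2 i ≠ 0)
    (hcanA : (Wᵀ * A * W).submatrix e e
      = Matrix.fromBlocks ((1 : Matrix (Fin n0) (Fin n0) ℝ) ⊗ₖ !![(0:ℝ),1;1,0]) 0 0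
          (Matrix.fromBlocks (Matrix.diagonal Λ1) 0 0
            (Matrix.fromBlocks (Matrix.diagonal Λ2) 0 0 0)))
    (hcanB : (Wᵀ * B * W).submatrix e e
      = Matrix.fromBlocks ((1 : Matrix (Fin n0) (Fin n0) ℝ) ⊗ₖ !![(1:ℝ),0;0,0]) 0 0
          (Matrix.fromBlocks (1 : Matrix (Fin n1) (Fin n1) ℝ) 0 0 0)) :
    (∃ V : Matrix (Fin n) (Fin n) ℝ, IsUnit V ∧
      (∃ dA : Fin n → ℝ, Vᵀ * A * V = Matrix.diagonal dA) ∧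
      (∃ dB : Fin n → ℝ, Vᵀ * B * V = Matrix.diagonal dB)) ↔ n0 = 0 := by
  constructor
  · rintro ⟨V, hV, ⟨dA, hdA⟩, ⟨dB, hdB⟩⟩
    by_contra h0
    have hVdet : IsUnit V.det := (Matrix.isUnit_iff_isUnit_det V).1 hV
    have hVdetT : IsUnit Vᵀ.det := by rwa [Matrix.det_transpose]
    have hVinv : IsUnit V⁻¹ := Matrix.isUnit_nonsing_inv_iff.2 hV
    have hSD : SDinv (Vᵀ * A * V) (Vᵀ * B * V) := by
      rw [hdA, hdB]; exact sd_diag dA dB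
    have hAB : SDinv A B := by
      have h := sd_congr (Vᵀ * A * V) (Vᵀ * B * V) V⁻¹ hVinv hSD
      have eq1 : ∀ M : Matrix (Fin n) (Fin n) ℝ,
          (V⁻¹)ᵀ * (Vᵀ * M * V) * V⁻¹ = M := by
        intro M
        have : (V⁻¹)ᵀ * (Vᵀ * M * V) * V⁻¹ = ((Vᵀ)⁻¹ * Vᵀ) * M * (V * V⁻¹) := by
          rw [Matrix.transpose_nonsing_inv]
          simp only [Matrix.mul_assoc]
        rw [this, Matrix.nonsing_inv_mul _ hVdetT, Matrix.mul_nonsing_inv _ hVdet,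
          Matrix.one_mul, Matrix.mul_one]
      rw [eq1 A, eq1 B] at h
      exact h
    have hcan : SDinv (Wᵀ * A * W) (Wᵀ * B * W) := sd_congr A B W hW hAB
    have hsub := sd_submatrix (Wᵀ * A * W) (Wᵀ * B * W) e hcan
    rw [hcanA, hcanB] at hsub
    -- now derive a contradiction using the first canonical block
    set i0 : Fin n0 := ⟨0, Nat.pos_of_ne_zero h0⟩
    set canA := Matrix.fromBlocks ((1 : Matrix (Fin n0) (Fin n0) ℝ) ⊗ₖ !![(0:ℝ),1;1,0]) 0 0
          (Matrix.fromBlocks (Matrix.diagonal Λ1) 0 0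
            (Matrix.fromBlocks (Matrix.diagonal Λ2) 0 0 0)) with hcA
    set canB := Matrix.fromBlocks ((1 : Matrix (Fin n0) (Fin n0) ℝ) ⊗ₖ !![(1:ℝ),0;0,0]) 0 0
          (Matrix.fromBlocks (1 : Matrix (Fin n1) (Fin n1) ℝ) 0 0 0) with hcB
    set x : ((Fin n0 × Fin 2) ⊕ (Fin n1 ⊕ (Fin n2 ⊕ Fin n3))) → ℝ :=
      Pi.single (Sum.inl (i0, 1)) 1 with hx
    set z : ((Fin n0 × Fin 2) ⊕ (Fin n1 ⊕ (Fin n2 ⊕ Fin n3))) → ℝ :=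
      Pi.single (Sum.inl (i0, 0)) 1 with hz
    have hx0 : canB *ᵥ x = 0 := by
      rw [hx, Matrix.mulVec_single]
      funext i
      rcases i with ⟨p, q⟩ | i
      · fin_cases q <;> simp [hcB, Matrix.one_apply]
      · simp [hcB]
    have hxz : canA *ᵥ x = canB *ᵥ z := by
      rw [hx, hz, Matrix.mulVec_single, Matrix.mulVec_single]
      funext i
      rcases i with ⟨p, q⟩ | i
      · fin_cases q <;> simp [hcA, hcB, Matrix.one_apply]
      · simp [hcA, hcB]
    have h := congrFun (hsub x z hx0 hxz) (Sum.inl (i0, 0))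
    rw [hx, Matrix.mulVec_single] at h
    simp [hcA, Matrix.one_apply] at h
  · intro h0
    subst h0
    refine ⟨W, hW, ?_, ?_⟩
    · refine ⟨(Sum.elim (fun _ : Fin 0 × Fin 2 => (0:ℝ)) (Sum.elim Λ1 (Sum.elim Λ2 (fun _ : Fin n3 => (0:ℝ))))) ∘ e.symm, ?_⟩
      have hdiag : (Matrix.fromBlocks ((1 : Matrix (Fin 0) (Fin 0) ℝ) ⊗ₖ !![(0:ℝ),1;1,0]) 0 0
          (Matrix.fromBlocks (Matrix.diagonal Λ1) 0 0
            (Matrix.fromBlocks (Matrix.diagonal Λ2) 0 0 0)))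
          = Matrix.diagonal (Sum.elim (fun _ : Fin 0 × Fin 2 => (0:ℝ)) (Sum.elim Λ1 (Sum.elim Λ2 (fun _ : Fin n3 => (0:ℝ))))) := by
        apply Matrix.ext
        rintro (⟨i0, i1⟩ | (i | (i | i))) (⟨j0, j1⟩ | (j | (j | j))) <;>
          first
          | exact i0.elim0
          | exact j0.elim0
          | simp [Matrix.diagonal_apply]
      have := congrArg (fun M => M.submatrix e.symm e.symm) hcanA
      simpa [Matrix.submatrix_submatrix, Equiv.self_comp_symm, hdiag] using this
    · refine ⟨(Sum.elim (fun _ : Fin 0 × Fin 2 => (0:ℝ)) (Sum.elim (fun _ : Fin n1 => (1:ℝ)) (fun _ : Fin n2 ⊕ Fin n3 => (0:ℝ)))) ∘ e.symm, ?_⟩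
      have hdiag : (Matrix.fromBlocks ((1 : Matrix (Fin 0) (Fin 0) ℝ) ⊗ₖ !![(1:ℝ),0;0,0]) 0 0
          (Matrix.fromBlocks (1 : Matrix (Fin n1) (Fin n1) ℝ) 0 0 0))
          = Matrix.diagonal (Sum.elim (fun _ : Fin 0 × Fin 2 => (0:ℝ)) (Sum.elim (fun _ : Fin n1 => (1:ℝ)) (fun _ : Fin n2 ⊕ Fin n3 => (0:ℝ)))) := by
        apply Matrix.ext
        rintro (⟨i0, i1⟩ | (i | i)) (⟨j0, j1⟩ | (j | j)) <;>
          first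
          | exact i0.elim0
          | exact j0.elim0
          | simp [Matrix.diagonal_apply, Matrix.one_apply]
      have := congrArg (fun M => M.submatrix e.symm e.symm) hcanB
      simpa [Matrix.submatrix_submatrix, Equiv.self_comp_symm, hdiag] using this
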